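/- arXiv:math/0608314 — 3 statements merged into one kernel-verified Lean document; each statement's English description precedes it below -/
import Mathlib

section
/- The (1,1)-tensor Γ = H∘G satisfies Γ²=Id, LΓ=L, and ΓL=−L; that is, Γ is an almost-product structure which is an L-connection on M. -/
/-- `Γ = H ∘ G` is an almost-product structure which is an `L`-connection: `Γ² = Id`, `LΓ = L`, `ΓL = -L`. -/
theorem stmt8
    {V : Type*} [LieRing V] [LieAlgebra ℝ V] (n : ℕ)
    (L v h G H : Module.End ℝ V)
    (hdim : Module.finrank ℝ V = 2 * n)
    (hrank : Module.finrank ℝ (LinearMap.range L) = n)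
    (hL2 : L * L = 0)
    (hIK : LinearMap.range L = LinearMap.ker L)
    (hvh : v + h = 1) (hv2 : v * v = v) (hh2 : h * h = h)
    (hvhz : v * h = 0) (hhvz : h * v = 0)
    (hImv : LinearMap.range v = LinearMap.range L)
    (hLv : L * v = 0) (hvL : v * L = L) (hLh : L * h = L) (hhL : h * L = 0)
    (hG1 : ∀ X : V, G (L X) = -(h X)) (hG2 : ∀ X : V, G (h X) = L X)
    (hH1 : ∀ X : V, H (L X) = h X) (hH2 : ∀ X : V, H (h X) = L X) :
    (H * G) * (H * G) = 1 ∧ L * (H * G) = L ∧ (H * G) * L = -L := by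
  -- key pointwise computation: (H*G) X = -(v X) + h X
  have key : ∀ X : V, (H * G) X = -(v X) + h X := by
    intro X
    obtain ⟨Y, hY⟩ : v X ∈ LinearMap.range L := by
      rw [← hImv]; exact LinearMap.mem_range_self v X
    have hX : X = L Y + h X := by
      have := congrFun (congrArg DFunLike.coe hvh) X
      simp only [LinearMap.add_apply, Module.End.one_apply] at this
      rw [hY, this]
    calc (H * G) X = H (G (L Y + h X)) := by rw [← hX]; rfl
      _ = H (-(h Y) + L X) := by rw [map_add, hG1, hG2]
      _ = -(L Y) + h X := by rw [map_add, map_neg, hH1, hH2]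
      _ = -(v X) + h X := by rw [hY]
  constructor
  · ext X
    have h1 := key X
    have h2 := key ((H * G) X)
    obtain ⟨Y, hY⟩ : v X ∈ LinearMap.range L := by
      rw [← hImv]; exact LinearMap.mem_range_self v X
    -- v (ΓX) = -(v X), h (ΓX) = h X
    have hvΓ : v ((H * G) X) = -(v X) := by
      rw [h1, map_add, map_neg]
      have e1 : v (v X) = v X := congrFun (congrArg DFunLike.coe hv2) X
      have e2 : v (h X) = 0 := congrFun (congrArg DFunLike.coe hvhz) X
      rw [e1, e2, add_zero]
    have hhΓ : h ((H * G) X) = h X := by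
      rw [h1, map_add, map_neg]
      have e1 : h (v X) = 0 := congrFun (congrArg DFunLike.coe hhvz) X
      have e2 : h (h X) = h X := congrFun (congrArg DFunLike.coe hh2) X
      rw [e1, e2, neg_zero, zero_add]
    have hsum : v X + h X = X := congrFun (congrArg DFunLike.coe hvh) X
    show (H * G) ((H * G) X) = (1 : Module.End ℝ V) X
    have := key ((H * G) X)
    rw [hvΓ, hhΓ, neg_neg] at this
    rw [this, hsum, Module.End.one_apply]
  constructor
  · ext X
    show L ((H * G) X) = L X
    rw [key X, map_add, map_neg]
    have e1 : L (v X) = 0 := congrFun (congrArg DFunLike.coe hLv) X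
    have e2 : L (h X) = L X := congrFun (congrArg DFunLike.coe hLh) X
    rw [e1, e2, neg_zero, zero_add]
  · ext X
    show (H * G) (L X) = (-L) X
    have e : (H * G) (L X) = H (G (L X)) := rfl
    rw [e, hG1, map_neg, hH2, LinearMap.neg_apply]
end

section
/- For a reducible L-regular linear connection D (DΓ=0) inducing L-connection Γ with associated almost-complex structure F, the following are equivalent: (a) DΓ=0; (b) DF=0; (c) Dv=0 and Dh=0. -/
/-- for an `L`-regular linear connection `D` inducing the
`L`-connection `Γ` with associated almost-complex structure `F`, the following are
equivalent: (a) `DΓ = 0`; (b) `DF = 0`; (c) `Dv = 0` and `Dh = 0`. -/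
theorem stmt13
    {V : Type*} [LieRing V] [LieAlgebra ℝ V]
    (L Γ F v h : Module.End ℝ V)
    (D : V →ₗ[ℝ] V →ₗ[ℝ] V)
    (hL2 : L * L = 0)
    (hIK : LinearMap.range L = LinearMap.ker L)
    (hLΓ : L * Γ = L) (hΓL : Γ * L = -L)
    (hv : v = (1/2 : ℝ) • (1 - Γ)) (hh : h = (1/2 : ℝ) • (1 + Γ))
    (hFL : F * L = h) (hFh : F * h = -L) (hLF : L * F = v)
    (hDL : ∀ X Y : V, D X (L Y) = L (D X Y)) :
    ((∀ X Y : V, D X (Γ Y) = Γ (D X Y)) ↔ (∀ X Y : V, D X (F Y) = F (D X Y))) ∧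
    ((∀ X Y : V, D X (F Y) = F (D X Y)) ↔
      ((∀ X Y : V, D X (v Y) = v (D X Y)) ∧ (∀ X Y : V, D X (h Y) = h (D X Y)))) := by
  have app : ∀ (A B : Module.End ℝ V), A = B → ∀ x : V, A x = B x := by
    intro A B hAB x; rw [hAB]
  -- basic algebraic identities
  have hvh : v + h = 1 := by rw [hv, hh]; module
  have hΓhv : Γ = h - v := by rw [hv, hh]; module
  have hpt : ∀ x : V, v x + h x = x := by
    intro x
    have := app _ _ hvh x
    simpa using this
  have hhF : h * F = F * v := by rw [← hFL, ← hLF, mul_assoc]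
  have h1v : (1 : Module.End ℝ V) - v = h := by rw [← hvh]; abel
  have h1h : (1 : Module.End ℝ V) - h = v := by rw [← hvh]; abel
  have hvF : v * F = -L := by
    calc v * F = (1 - h) * F := by rw [h1h]
      _ = F - F * v := by rw [sub_mul, one_mul, hhF]
      _ = F * (1 - v) := by rw [mul_sub, mul_one]
      _ = F * h := by rw [h1v]
      _ = -L := hFh
  have hFdec : F = h * F - L := by
    have e : v * F + h * F = F := by rw [← add_mul, hvh, one_mul]
    rw [hvF, show -L + h * F = h * F - L from by abel] at e
    exact e.symm
  have hΓFL : Γ = F * L - L * F := by rw [hΓhv, hFL, hLF]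
  -- pointwise versions
  have hFLpt : ∀ x : V, F (L x) = h x := fun x => app _ _ hFL x
  have hLFpt : ∀ x : V, L (F x) = v x := fun x => app _ _ hLF x
  have hvFpt : ∀ x : V, v (F x) = -(L x) := by
    intro x; have := app _ _ hvF x; simpa using this
  have hhFpt : ∀ x : V, h (F x) = F (v x) := fun x => app _ _ hhF x
  have hFdecpt : ∀ x : V, F x = h (F x) - L x := by
    intro x; have := app _ _ hFdec x; simpa using this
  have hΓFLpt : ∀ x : V, Γ x = F (L x) - L (F x) := by
    intro x; have := app _ _ hΓFL x; simpa using this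
  have hΓhvpt : ∀ x : V, Γ x = h x - v x := by
    intro x; have := app _ _ hΓhv x; simpa using this
  -- (a) → (b)
  have hab : (∀ X Y : V, D X (Γ Y) = Γ (D X Y)) → (∀ X Y : V, D X (F Y) = F (D X Y)) := by
    intro ha
    have hDv : ∀ X Y : V, D X (v Y) = v (D X Y) := by
      intro X Y
      simp only [hv, LinearMap.smul_apply, LinearMap.sub_apply, Module.End.one_apply,
        map_smul, map_sub, ha X Y]
    have hDh : ∀ X Y : V, D X (h Y) = h (D X Y) := by
      intro X Y
      simp only [hh, LinearMap.smul_apply, LinearMap.add_apply, Module.End.one_apply,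
        map_smul, map_add, ha X Y]
    intro X Y
    have A1 : D X (F Y) = h (D X (F Y)) - L (D X Y) := by
      conv_lhs => rw [hFdecpt Y]
      rw [map_sub, hDh, hDL]
    have A2 : v (D X (F Y)) = -(L (D X Y)) := by
      have e := eq_sub_of_add_eq (hpt (D X (F Y)))
      rw [e]
      nth_rewrite 1 [A1]
      abel
    have A3 : h (D X (F Y)) = F (v (D X Y)) := by
      rw [← hFLpt, ← hDL, hLFpt, hDv]
    calc D X (F Y) = v (D X (F Y)) + h (D X (F Y)) := (hpt _).symm
      _ = -(L (D X Y)) + F (v (D X Y)) := by rw [A2, A3]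
      _ = v (F (D X Y)) + h (F (D X Y)) := by rw [hvFpt, hhFpt]
      _ = F (D X Y) := hpt _
  -- (b) → (a)
  have hba : (∀ X Y : V, D X (F Y) = F (D X Y)) → (∀ X Y : V, D X (Γ Y) = Γ (D X Y)) := by
    intro hb X Y
    rw [hΓFLpt Y, map_sub, hDL, hb, hb, hDL, hΓFLpt (D X Y)]
  -- (b) → (c)
  have hbc : (∀ X Y : V, D X (F Y) = F (D X Y)) →
      ((∀ X Y : V, D X (v Y) = v (D X Y)) ∧ (∀ X Y : V, D X (h Y) = h (D X Y))) := by
    intro hb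
    constructor
    · intro X Y
      rw [← hLFpt Y, hDL, hb, hLFpt]
    · intro X Y
      rw [← hFLpt Y, hb, hDL, hFLpt]
  -- (c) → (a)
  have hca : ((∀ X Y : V, D X (v Y) = v (D X Y)) ∧ (∀ X Y : V, D X (h Y) = h (D X Y))) →
      (∀ X Y : V, D X (Γ Y) = Γ (D X Y)) := by
    rintro ⟨hcv, hch⟩ X Y
    rw [hΓhvpt Y, map_sub, hcv, hch, hΓhvpt (D X Y)]
  exact ⟨⟨hab, hba⟩, ⟨hbc, fun hc => hab (hca hc)⟩⟩
end

section
/- Let Γ be an L-connection with projectors v,h and associated almost-complex structure F, and B an L-semibasic vector 2-form with B°+[C,h]=0. The connection defined by D_X Y = h[LY,F]X + L[vY,F]X + F B(X,Y) + B(X,FY) (brackets denoting Frölicher–Nijenhuis brackets evaluated at X) satisfies D_{LX}(LY)=L[LX,Y] and D_{hX}(LY)=v[hX,LY]+B(X,Y) for all vector fields X,Y. -/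
/-- Frölicher–Nijenhuis bracket of two vector 1-forms, evaluated on vector fields. -/
def fnBracket {V : Type*} [LieRing V] [LieAlgebra ℝ V]
    (K K' : Module.End ℝ V) (X Y : V) : V :=
  ⁅K X, K' Y⁆ + ⁅K' X, K Y⁆ + K (K' ⁅X, Y⁆) + K' (K ⁅X, Y⁆)
    - K ⁅K' X, Y⁆ - K ⁅X, K' Y⁆ - K' ⁅K X, Y⁆ - K' ⁅X, K Y⁆

/-- Frölicher–Nijenhuis bracket `[Z,F]` of a vector field `Z` with a vector 1-form
`F`, evaluated on a vector field `X`. -/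
def fnBracketVF {V : Type*} [LieRing V] [LieAlgebra ℝ V]
    (Z : V) (F : Module.End ℝ V) (X : V) : V :=
  ⁅Z, F X⁆ - F ⁅Z, X⁆

/-- the connection
`D_X Y = h[LY,F]X + L[vY,F]X + F B(X,Y) + B(X,FY)` associated to an
`L`-connection `Γ` and an `L`-semibasic 2-form `B` with `B° + [C,h] = 0` satisfies
`D_{LX}(LY) = L[LX,Y]` and `D_{hX}(LY) = v[hX,LY] + B(X,Y)`. -/
theorem stmt15
    {V : Type*} [LieRing V] [LieAlgebra ℝ V]
    (L Γ F v h : Module.End ℝ V) (C : V)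
    (B : V →ₗ[ℝ] V →ₗ[ℝ] V)
    (hL2 : L * L = 0)
    (hLL : ∀ X Y : V, fnBracket L L X Y = 0)
    (hIK : LinearMap.range L = LinearMap.ker L)
    (hCL : ∀ X : V, ⁅C, L X⁆ - L ⁅C, X⁆ = -(L X))
    (hLΓ : L * Γ = L) (hΓL : Γ * L = -L)
    (hv : v = (1/2 : ℝ) • (1 - Γ)) (hh : h = (1/2 : ℝ) • (1 + Γ))
    (hFL : F * L = h) (hFh : F * h = -L) (hLF : L * F = v)
    (hBalt : ∀ X Y : V, B X Y = -(B Y X))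
    (hBsb1 : ∀ X Y : V, L (B X Y) = 0)
    (hBsb2 : ∀ X Y : V, X ∈ LinearMap.range L → B X Y = 0)
    (hBpot : ∀ S : V, L S = C → ∀ X : V, B S X + (⁅C, h X⁆ - h ⁅C, X⁆) = 0)
    (D : V → V → V)
    (hD : ∀ X Y : V, D X Y =
      h (fnBracketVF (L Y) F X) + L (fnBracketVF (v Y) F X) + F (B X Y) + B X (F Y)) :
    (∀ X Y : V, D (L X) (L Y) = L ⁅L X, Y⁆) ∧
    (∀ X Y : V, D (h X) (L Y) = v ⁅h X, L Y⁆ + B X Y) := by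
  have hL2' : ∀ z : V, L (L z) = 0 := fun z => by
    have := congrArg (fun f : Module.End ℝ V => f z) hL2
    simpa [Module.End.mul_apply] using this
  have hΓL' : ∀ z : V, Γ (L z) = -(L z) := fun z => by
    have := congrArg (fun f : Module.End ℝ V => f z) hΓL
    simpa [Module.End.mul_apply] using this
  have hFL' : ∀ z : V, F (L z) = h z := fun z => by
    have := congrArg (fun f : Module.End ℝ V => f z) hFL
    simpa [Module.End.mul_apply] using this
  have hFh' : ∀ z : V, F (h z) = -(L z) := fun z => by
    have := congrArg (fun f : Module.End ℝ V => f z) hFh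
    simpa [Module.End.mul_apply] using this
  have hLF' : ∀ z : V, L (F z) = v z := fun z => by
    have := congrArg (fun f : Module.End ℝ V => f z) hLF
    simpa [Module.End.mul_apply] using this
  have hvL : ∀ z : V, v (L z) = L z := fun z => by
    rw [hv]
    simp only [LinearMap.smul_apply, LinearMap.sub_apply, Module.End.one_apply, hΓL' z,
      sub_neg_eq_add]
    rw [← two_smul ℝ, smul_smul]; norm_num
  have hhv : ∀ z : V, h z = z - v z := fun z => by
    rw [hv, hh]
    simp only [LinearMap.smul_apply, LinearMap.sub_apply, LinearMap.add_apply,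
      Module.End.one_apply, smul_sub, smul_add]
    module
  -- the key identity from [L,L] = 0
  have key : ∀ X Y : V, ⁅L X, L Y⁆ = L ⁅L X, Y⁆ + L ⁅X, L Y⁆ := by
    intro X Y
    have hE := hLL X Y
    simp only [fnBracket, hL2', add_zero] at hE
    have h2 : (2 : ℝ) • ⁅L X, L Y⁆ = (2 : ℝ) • (L ⁅L X, Y⁆ + L ⁅X, L Y⁆) := by
      rw [two_smul, two_smul, ← sub_eq_zero, ← hE]; abel
    calc ⁅L X, L Y⁆ = (1/2 : ℝ) • ((2 : ℝ) • ⁅L X, L Y⁆) := by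
          rw [smul_smul]; norm_num
      _ = (1/2 : ℝ) • ((2 : ℝ) • (L ⁅L X, Y⁆ + L ⁅X, L Y⁆)) := by rw [h2]
      _ = L ⁅L X, Y⁆ + L ⁅X, L Y⁆ := by rw [smul_smul]; norm_num
  have LrangeL : ∀ a b : V, L ⁅L a, L b⁆ = 0 := fun a b => by
    rw [key, map_add, hL2', hL2', add_zero]
  have hBv : ∀ a b : V, B (v a) b = 0 := fun a b =>
    hBsb2 _ _ ⟨F a, hLF' a⟩
  have hBv' : ∀ a b : V, B a (v b) = 0 := fun a b => by
    rw [hBalt, hBv, neg_zero]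
  have hLlv : ∀ a b : V, L ⁅L a, v b⁆ = 0 := fun a b => by
    rw [← hLF' b, LrangeL]
  constructor
  · intro X Y
    rw [hD]
    have t1 : fnBracketVF (L (L Y)) F (L X) = 0 := by
      rw [hL2']
      simp [fnBracketVF]
    have t3 : B (L X) (L Y) = 0 := hBsb2 _ _ ⟨X, rfl⟩
    have t4 : B (L X) (F (L Y)) = 0 := hBsb2 _ _ ⟨X, rfl⟩
    rw [t1, t3, t4, map_zero, map_zero, hvL]
    simp only [fnBracketVF, hFL' X]
    rw [map_sub, hLF']
    have e1 : L ⁅L Y, h X⁆ = L ⁅L Y, X⁆ := by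
      rw [hhv, lie_sub, map_sub, hLlv, sub_zero]
    have e2 : v ⁅L Y, L X⁆ = L ⁅L Y, X⁆ + L ⁅Y, L X⁆ := by
      rw [key Y X, map_add, hvL, hvL]
    rw [e1, e2]
    rw [← lie_skew (L X) Y, map_neg]
    abel
  · intro X Y
    rw [hD]
    have t1 : fnBracketVF (L (L Y)) F (h X) = 0 := by
      rw [hL2']
      simp [fnBracketVF]
    have t3 : B (h X) (L Y) = 0 := by
      rw [hBalt, hBsb2 _ _ ⟨Y, rfl⟩, neg_zero]
    have t4 : B (h X) (F (L Y)) = B X Y := by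
      rw [hFL', hhv X, hhv Y]
      simp [map_sub, LinearMap.sub_apply, hBv, hBv']
    rw [t1, t3, t4, map_zero, map_zero, hvL]
    simp only [fnBracketVF, hFh' X]
    rw [map_sub, hLF']
    have e0 : L ⁅L Y, -(L X)⁆ = 0 := by
      rw [lie_neg, map_neg, LrangeL, neg_zero]
    rw [e0]
    rw [← lie_skew (h X) (L Y), map_neg]
    abel
end
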